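/- Let (L₁, L₂, P, (⊛ᵢ, ↙ⁱ, ↖ᵢ)_{i∈I}) be a multi-adjoint object-oriented frame, (X, Y, φ, τ) a context of this frame, and φ†, φ_† the associated operators. Then φ† ∘ φ_† is an interior (kernel) operator on Y → L₂: it is monotone, satisfies φ†(φ_† λ) ≤ λ pointwise for all λ : Y → L₂, and is idempotent. Moreover, the set Fix(φ†∘φ_†) = { λ : Y → L₂ ∣ φ†(φ_† λ) = λ }, ordered pointwise, is a complete lattice in which the supremum of a family (λⱼ)_{j∈J} is the pointwise supremum ⨆ⱼ λⱼ and the infimum is φ†(φ_†(⨅ⱼ λⱼ)). -/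
import Mathlib


/-- `φ† ∘ φ_†` is an interior (kernel) operator on `Y → L₂`, and
its fixed points form a complete lattice with pointwise suprema and with
infima given by the kernel of the pointwise infimum. -/
theorem stmt_15 {L₁ L₂ P : Type*} [CompleteLattice L₁] [CompleteLattice L₂]
    [CompleteLattice P] {I : Type*}
    (w : I → L₁ → P → L₂) (ld : I → L₂ → P → L₁) (lu : I → L₂ → L₁ → P)
    (adj : ∀ (i : I) (x : L₁) (z : P) (y : L₂),
      (w i x z ≤ y ↔ x ≤ ld i y z) ∧ (w i x z ≤ y ↔ z ≤ lu i y x))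
    {X Y : Type*} (φ : X → Y → P) (τ : Y → I)
    (dag : (X → L₁) → Y → L₂) (ldag : (Y → L₂) → X → L₁)
    (hdag : ∀ (μ : X → L₁) (y : Y), dag μ y = ⨆ x, w (τ y) (μ x) (φ x y))
    (hldag : ∀ (lam : Y → L₂) (x : X), ldag lam x = ⨅ y, ld (τ y) (lam y) (φ x y))
    {J : Type*} (lam : J → Y → L₂) (hlam : ∀ j, dag (ldag (lam j)) = lam j) :
    -- `φ† ∘ φ_†` is an interior (kernel) operator
    (∀ lam₁ lam₂ : Y → L₂, lam₁ ≤ lam₂ → dag (ldag lam₁) ≤ dag (ldag lam₂)) ∧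
    (∀ lam₀ : Y → L₂, dag (ldag lam₀) ≤ lam₀) ∧
    (∀ lam₀ : Y → L₂, dag (ldag (dag (ldag lam₀))) = dag (ldag lam₀)) ∧
    -- the pointwise supremum of fixed points is a fixed point ...
    dag (ldag (⨆ j, lam j)) = ⨆ j, lam j ∧
    -- ... and is the least upper bound of the family among fixed points
    (∀ j, lam j ≤ ⨆ j, lam j) ∧
    (∀ ν : Y → L₂, dag (ldag ν) = ν → (∀ j, lam j ≤ ν) → (⨆ j, lam j) ≤ ν) ∧
    -- the kernel of the pointwise infimum is a fixed point ...
    dag (ldag (dag (ldag (⨅ j, lam j)))) = dag (ldag (⨅ j, lam j)) ∧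
    -- ... and is the greatest lower bound of the family among fixed points
    (∀ j, dag (ldag (⨅ j, lam j)) ≤ lam j) ∧
    (∀ ν : Y → L₂, dag (ldag ν) = ν → (∀ j, ν ≤ lam j) →
      ν ≤ dag (ldag (⨅ j, lam j))) := by

  -- w monotone in first argument
  have wmono : ∀ i (x x' : L₁) z, x ≤ x' → w i x z ≤ w i x' z := by
    intro i x x' z h
    exact ((adj i x z (w i x' z)).1).mpr (h.trans (((adj i x' z (w i x' z)).1).mp le_rfl))
  -- ld monotone in y
  have ldmono : ∀ i (y y' : L₂) z, y ≤ y' → ld i y z ≤ ld i y' z := by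
    intro i y y' z h
    exact ((adj i (ld i y z) z y').1).mp ((((adj i (ld i y z) z y).1).mpr le_rfl).trans h)
  have dagmono : ∀ μ μ' : X → L₁, μ ≤ μ' → dag μ ≤ dag μ' := by
    intro μ μ' h y
    rw [hdag, hdag]
    exact iSup_mono fun x => wmono _ _ _ _ (h x)
  have ldagmono : ∀ l l' : Y → L₂, l ≤ l' → ldag l ≤ ldag l' := by
    intro l l' h x
    rw [hldag, hldag]
    exact iInf_mono fun y => ldmono _ _ _ _ (h y)
  have kmono : ∀ l l' : Y → L₂, l ≤ l' → dag (ldag l) ≤ dag (ldag l') :=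
    fun l l' h => dagmono _ _ (ldagmono _ _ h)
  have kdefl : ∀ l : Y → L₂, dag (ldag l) ≤ l := by
    intro l y
    rw [hdag]
    refine iSup_le fun x => ?_
    refine ((adj _ _ _ _).1).mpr ?_
    rw [hldag]
    exact iInf_le _ y
  have infl : ∀ μ : X → L₁, μ ≤ ldag (dag μ) := by
    intro μ x
    rw [hldag]
    refine le_iInf fun y => ?_
    refine ((adj _ _ _ _).1).mp ?_
    rw [hdag]
    exact le_iSup (fun x => w (τ y) (μ x) (φ x y)) x
  have kidem : ∀ l : Y → L₂, dag (ldag (dag (ldag l))) = dag (ldag l) := by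
    intro l
    refine le_antisymm (kdefl _) (dagmono _ _ ?_)
    exact (infl (ldag l)).trans (ldagmono _ _ le_rfl)
  have hsup : dag (ldag (⨆ j, lam j)) = ⨆ j, lam j := by
    refine le_antisymm (kdefl _) (iSup_le fun j => ?_)
    rw [← hlam j]
    exact kmono _ _ (le_iSup lam j)
  refine ⟨kmono, kdefl, kidem, hsup, fun j => le_iSup lam j,
    fun ν hν h => iSup_le h, kidem _, fun j => (kdefl _).trans (iInf_le lam j),
    fun ν hν h => ?_⟩
  rw [← hν]
  exact kmono _ _ (le_iInf h)
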